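/- Let η be a Poisson random variable with parameter 1 and ξ = η − 1. Then the L^p norms satisfy |ξ|_p = (E|ξ|^p)^{1/p} ~ p/(e · ln p) as p → ∞, i.e., the ratio |ξ|_p · (e ln p)/p tends to 1. -/

import Mathlib

open MeasureTheory ProbabilityTheory Filter Real
open scoped Nat ENNReal NNReal

lemma key_ineq {x p t : ℝ} (hx : 1 ≤ x) (hp : 0 < p) (ht : 0 < t) :
    x ^ p ≤ (p / (Real.exp 1 * t)) ^ p * Real.exp (t * x) := by
  have hx0 : (0:ℝ) < x := lt_of_lt_of_le one_pos hx
  have hpt : (0:ℝ) < p / t := div_pos hp ht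
  have h1 : Real.log (x * (t / p)) ≤ x * (t / p) - 1 :=
    Real.log_le_sub_one_of_pos (by positivity)
  have h2 : Real.log x ≤ x * (t / p) - 1 + Real.log (p / t) := by
    rw [Real.log_mul (ne_of_gt hx0) (by positivity), Real.log_div ht.ne' hp.ne'] at h1
    have := Real.log_div hp.ne' ht.ne'
    linarith
  have h3 : Real.log x * p ≤ (Real.log (p/t) - 1) * p + t * x := by
    have := mul_le_mul_of_nonneg_right h2 hp.le
    have hne : x * (t/p) * p = t * x := by field_simp
    nlinarith [this]
  calc x ^ p = Real.exp (Real.log x * p) := by rw [← Real.rpow_def_of_pos hx0]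
    _ ≤ Real.exp ((Real.log (p/t) - 1) * p + t * x) := Real.exp_le_exp.mpr h3
    _ = (p / (Real.exp 1 * t)) ^ p * Real.exp (t * x) := by
        rw [Real.exp_add,
          Real.rpow_def_of_pos (show (0:ℝ) < p / (Real.exp 1 * t) by positivity)]
        congr 2
        rw [show p / (Real.exp 1 * t) = (p / t) / Real.exp 1 by ring,
          Real.log_div (ne_of_gt hpt) (Real.exp_ne_zero 1), Real.log_exp]

noncomputable def gf (p : ℝ) (k : ℕ) : ℝ := Real.exp (-1) / k ! * |(k : ℝ) - 1| ^ p

lemma gf_nonneg (p : ℝ) (k : ℕ) : 0 ≤ gf p k := by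
  unfold gf; positivity

lemma gf_zero (p : ℝ) : gf p 0 = Real.exp (-1) := by
  simp [gf]

lemma gf_succ_le (p t : ℝ) (hp : 0 < p) (ht : 0 < t) (k : ℕ) :
    gf p (k + 1) ≤ Real.exp (-1) * (p / (Real.exp 1 * t)) ^ p
      * ((Real.exp t) ^ (k + 1) / (k + 1)!) := by
  unfold gf
  have h1 : |((k : ℕ) + 1 : ℝ) - 1| ^ p ≤ ((k : ℝ) + 1) ^ p := by
    apply Real.rpow_le_rpow (abs_nonneg _) _ hp.le
    rw [add_sub_cancel_right, abs_of_nonneg (Nat.cast_nonneg k)]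
    linarith
  have h2 : ((k : ℝ) + 1) ^ p ≤ (p / (Real.exp 1 * t)) ^ p * Real.exp (t * ((k:ℝ)+1)) :=
    key_ineq (by linarith [Nat.cast_nonneg (α := ℝ) k]) hp ht
  have h3 : Real.exp (t * ((k:ℝ)+1)) = (Real.exp t) ^ (k + 1) := by
    rw [show t * ((k:ℝ)+1) = ((k:ℕ)+1 : ℕ) * t by push_cast; ring, Real.exp_nat_mul]
  have hfac : (0:ℝ) < (k+1)! := by positivity
  have hcast : |((k + 1 : ℕ) : ℝ) - 1| ^ p = |((k:ℝ) + 1) - 1| ^ p := by push_cast; ring_nf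
  rw [hcast]
  calc Real.exp (-1) / (k+1)! * |((k:ℝ) + 1) - 1| ^ p
      ≤ Real.exp (-1) / (k+1)! * ((p / (Real.exp 1 * t)) ^ p * (Real.exp t) ^ (k + 1)) := by
        apply mul_le_mul_of_nonneg_left _ (by positivity)
        rw [← h3]
        exact le_trans h1 h2
    _ = Real.exp (-1) * (p / (Real.exp 1 * t)) ^ p * ((Real.exp t) ^ (k + 1) / (k + 1)!) := by
        ring
  
lemma summable_gf (p : ℝ) (hp : 0 < p) : Summable (gf p) := by
  apply Summable.of_nonneg_of_le (gf_nonneg p)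
    (f := fun k => (Real.exp (-1) * ((p / (Real.exp 1 * 1)) ^ p + 1)) * ((Real.exp 1) ^ k / k !))
  · intro k
    cases k with
    | zero =>
      simp [gf_zero]
      nlinarith [Real.exp_pos (-1:ℝ), Real.rpow_nonneg (show (0:ℝ) ≤ p / Real.exp 1 by positivity) p]
    | succ n =>
      refine le_trans (gf_succ_le p 1 hp one_pos n) ?_
      have h0 : (0:ℝ) ≤ (Real.exp 1) ^ (n+1) / (n+1)! := by positivity
      have : Real.exp (-1) * (p / (Real.exp 1 * 1)) ^ p
          ≤ Real.exp (-1) * ((p / (Real.exp 1 * 1)) ^ p + 1) := by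
        nlinarith [Real.exp_pos (-1:ℝ)]
      exact mul_le_mul_of_nonneg_right this h0
  · exact (Real.summable_pow_div_factorial (Real.exp 1)).mul_left _

lemma tsum_pow_div_factorial' (x : ℝ) : ∑' n : ℕ, x ^ n / n ! = Real.exp x := by
  rw [Real.exp_eq_exp_ℝ, NormedSpace.exp_eq_tsum_div]

lemma S_upper (p t : ℝ) (hp : 0 < p) (ht : 0 < t) :
    ∑' k, gf p k ≤ Real.exp (-1) * (1 + (p / (Real.exp 1 * t)) ^ p * Real.exp (Real.exp t)) := by
  rw [Summable.tsum_eq_zero_add (summable_gf p hp), gf_zero, mul_add, mul_one]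
  apply add_le_add_right
  have hsum : Summable (fun k : ℕ => (Real.exp t) ^ k / k !) :=
    Real.summable_pow_div_factorial _
  have hsum1 : Summable (fun k : ℕ => (Real.exp t) ^ (k+1) / (k+1)!) :=
    (summable_nat_add_iff 1).mpr hsum
  calc ∑' k, gf p (k + 1)
      ≤ ∑' k : ℕ, Real.exp (-1) * (p / (Real.exp 1 * t)) ^ p * ((Real.exp t) ^ (k+1) / (k+1)!) := by
        apply Summable.tsum_le_tsum (gf_succ_le p t hp ht)
          ((summable_nat_add_iff 1).mpr (summable_gf p hp)) (hsum1.mul_left _)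
    _ = Real.exp (-1) * (p / (Real.exp 1 * t)) ^ p * ∑' k : ℕ, (Real.exp t) ^ (k+1) / (k+1)! := by
        rw [tsum_mul_left]
    _ ≤ Real.exp (-1) * (p / (Real.exp 1 * t)) ^ p * Real.exp (Real.exp t) := by
        apply mul_le_mul_of_nonneg_left _ (by positivity)
        have h := Summable.tsum_eq_zero_add hsum
        rw [tsum_pow_div_factorial'] at h
        simp only [pow_zero, Nat.factorial_zero, Nat.cast_one, div_one] at h
        linarith
    _ = _ := by ring_nf

lemma S_lower (p : ℝ) (hp : 0 < p) (k : ℕ) : gf p k ≤ ∑' j, gf p j :=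
  Summable.le_tsum (summable_gf p hp) k (fun j _ => gf_nonneg p j)

lemma pmf_apply (k : ℕ) : ((poissonPMF 1 k) : ℝ≥0∞) = ENNReal.ofReal (Real.exp (-1) / k !) := by
  have : poissonPMF 1 k = ENNReal.ofReal (poissonPMFReal 1 k) := rfl
  rw [this]
  congr 1
  simp [poissonPMFReal]

lemma integrable_f (p : ℝ) (hp : 0 < p) :
    Integrable (fun n : ℕ => |(n : ℝ) - 1| ^ p) ((poissonPMF 1).toMeasure) := by
  constructor
  · exact measurable_from_nat.aestronglyMeasurable
  · rw [hasFiniteIntegral_def]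
    rw [lintegral_countable']
    have heq : ∀ k : ℕ, (‖|(k : ℝ) - 1| ^ p‖ₑ : ℝ≥0∞) * (poissonPMF 1).toMeasure {k}
        = ENNReal.ofReal (gf p k) := by
      intro k
      rw [PMF.toMeasure_apply_singleton _ _ (measurableSet_singleton k), pmf_apply,
        ← ofReal_norm, Real.norm_eq_abs,
        abs_of_nonneg (Real.rpow_nonneg (abs_nonneg _) p),
        ← ENNReal.ofReal_mul (Real.rpow_nonneg (abs_nonneg _) p)]
      unfold gf
      rw [mul_comm]
    rw [tsum_congr heq, ← ENNReal.ofReal_tsum_of_nonneg (gf_nonneg p) (summable_gf p hp)]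
    exact ENNReal.ofReal_lt_top

lemma int_repr {Ω : Type*} [MeasurableSpace Ω] (μ : Measure Ω) [IsProbabilityMeasure μ]
    (η : Ω → ℕ) (hη : Measurable η) (hdist : μ.map η = poissonMeasure 1)
    (p : ℝ) (hp : 0 < p) :
    ∫ ω, |(η ω : ℝ) - 1| ^ p ∂μ = ∑' k, gf p k := by
  have h1 : ∫ ω, |(η ω : ℝ) - 1| ^ p ∂μ = ∫ n, |(n : ℝ) - 1| ^ p ∂(μ.map η) :=
    (integral_map (f := fun n : ℕ => |(n : ℝ) - 1| ^ p) hη.aemeasurable measurable_from_nat.aestronglyMeasurable).symm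
  rw [h1, hdist]
  rw [integral_poissonMeasure]
  apply tsum_congr
  intro k
  simp only [NNReal.coe_one, one_pow, mul_one, smul_eq_mul, gf]

lemma ratio_lower (p : ℝ) (h1 : 2 ≤ Real.log p) (h2 : Real.log p ≤ p / 4) (h4 : 2 ≤ p) :
    Real.exp (-(1/p)) * Real.exp (-(Real.log p / p)) * (1 - Real.log p / p) ≤
      (∑' k, gf p k) ^ (1/p) * (Real.exp 1 * Real.log p) / p := by
  set ℓ := Real.log p with hℓdef
  have hp0 : (0:ℝ) < p := by linarith
  have hℓ0 : (0:ℝ) < ℓ := by linarith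
  set k := ⌈p / ℓ⌉₊ with hkdef
  have hk_lb : p / ℓ ≤ (k : ℝ) := Nat.le_ceil _
  have hk_ub : (k : ℝ) ≤ p / ℓ + 1 := (Nat.ceil_lt_add_one (by positivity)).le
  have hpl4 : (4:ℝ) ≤ p / ℓ := by rw [le_div_iff₀ hℓ0]; linarith
  have hk4 : (4:ℝ) ≤ (k:ℝ) := le_trans hpl4 hk_lb
  have hkp : (k:ℝ) ≤ p := by
    have h' : p / ℓ ≤ p / 2 := div_le_div_of_nonneg_left hp0.le two_pos h1
    linarith
  have hk0 : (0:ℝ) < (k:ℝ) := by linarith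
  -- factorial bound : k! ≤ exp (p + ℓ)
  have hfact : ((k ! : ℕ) : ℝ) ≤ Real.exp (p + ℓ) := by
    have hf1 : ((k ! : ℕ) : ℝ) ≤ ((k:ℝ)) ^ (k:ℕ) := by
      exact_mod_cast Nat.cast_le.mpr (Nat.factorial_le_pow k)
    have hf2 : ((k:ℝ)) ^ (k:ℕ) = Real.exp ((k:ℝ) * Real.log (k:ℝ)) := by
      rw [← Real.rpow_natCast (k:ℝ) k, Real.rpow_def_of_pos hk0]
      ring_nf
    have hlogk : Real.log (k:ℝ) ≤ ℓ := Real.log_le_log hk0 hkp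
    have hlogk0 : 0 ≤ Real.log (k:ℝ) := Real.log_nonneg (by linarith)
    have hklogk : (k:ℝ) * Real.log (k:ℝ) ≤ p + ℓ := by
      have e1 : (k:ℝ) * Real.log (k:ℝ) ≤ (p/ℓ + 1) * Real.log (k:ℝ) :=
        mul_le_mul_of_nonneg_right hk_ub hlogk0
      have e2 : (p/ℓ + 1) * Real.log (k:ℝ) ≤ (p/ℓ + 1) * ℓ :=
        mul_le_mul_of_nonneg_left hlogk (by positivity)
      have e3 : (p/ℓ + 1) * ℓ = p + ℓ := by field_simp
      linarith
    exact le_trans (hf1.trans hf2.le) (Real.exp_le_exp.mpr hklogk)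
  have hgk : Real.exp (-1) * Real.exp (-(p + ℓ)) * ((k:ℝ) - 1) ^ p ≤ gf p k := by
    unfold gf
    have habs : |(k:ℝ) - 1| = (k:ℝ) - 1 := abs_of_nonneg (by linarith)
    rw [habs]
    apply mul_le_mul_of_nonneg_right _ (Real.rpow_nonneg (by linarith) p)
    rw [Real.exp_neg (p + ℓ), div_eq_mul_inv]
    apply mul_le_mul_of_nonneg_left _ (Real.exp_pos (-1)).le
    apply inv_anti₀ (by positivity) hfact
  -- rpow of the lower witness
  have hM : Real.exp (-(1/p)) * Real.exp (-((p + ℓ)/p)) * ((k:ℝ) - 1)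
      ≤ (gf p k) ^ (1/p) := by
    have hc : (0:ℝ) ≤ (k:ℝ) - 1 := by linarith
    have := Real.rpow_le_rpow (by positivity) hgk (by positivity : (0:ℝ) ≤ 1/p)
    rw [Real.mul_rpow (by positivity) (Real.rpow_nonneg hc p),
      Real.mul_rpow (by positivity) (by positivity),
      ← Real.rpow_mul hc, mul_one_div_cancel hp0.ne', Real.rpow_one,
      ← Real.exp_mul, ← Real.exp_mul] at this
    calc Real.exp (-(1/p)) * Real.exp (-((p + ℓ)/p)) * ((k:ℝ) - 1)
        = Real.exp (-1 * (1/p)) * Real.exp (-(p+ℓ) * (1/p)) * ((k:ℝ) - 1) := by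
          congr 2 <;> [skip; skip] <;> congr 1 <;> ring
      _ ≤ (gf p k) ^ (1/p) := this
  have hsplit : Real.exp (-((p + ℓ)/p)) = Real.exp (-1) * Real.exp (-(ℓ/p)) := by
    rw [← Real.exp_add]
    congr 1
    field_simp
    ring
  calc Real.exp (-(1/p)) * Real.exp (-(ℓ/p)) * (1 - ℓ/p)
      ≤ Real.exp (-(1/p)) * Real.exp (-(ℓ/p)) * (((k:ℝ) - 1) * ℓ / p) := by
        apply mul_le_mul_of_nonneg_left _ (by positivity)
        rw [show (1 : ℝ) - ℓ/p = (p - ℓ)/p by field_simp, div_le_div_iff₀ hp0 hp0]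
        have hkl : p ≤ (k:ℝ) * ℓ := by
          rw [div_le_iff₀ hℓ0] at hk_lb; linarith
        nlinarith
    _ = (Real.exp (-(1/p)) * Real.exp (-((p + ℓ)/p)) * ((k:ℝ) - 1)) * (Real.exp 1 * ℓ) / p := by
        rw [hsplit, Real.exp_neg (1:ℝ)]
        field_simp
    _ ≤ (gf p k) ^ (1/p) * (Real.exp 1 * ℓ) / p := by gcongr
    _ ≤ (∑' j, gf p j) ^ (1/p) * (Real.exp 1 * ℓ) / p := by
        gcongr
        · exact gf_nonneg p k
        · exact S_lower p hp0 k

lemma ratio_upper (p : ℝ) (h1 : 2 ≤ Real.log p) (h2 : Real.log p ≤ p / 4)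
    (h3 : Real.log (Real.log p) ≤ Real.log p / 8) (h4 : 2 ≤ p) :
    (∑' k, gf p k) ^ (1/p) * (Real.exp 1 * Real.log p) / p ≤
      (2 * Real.exp (-1)) ^ (1/p) * Real.exp (1/(Real.log p)^2)
        * (Real.log p / (Real.log p - 2 * Real.log (Real.log p))) := by
  set ℓ := Real.log p with hℓdef
  have hp0 : (0:ℝ) < p := by linarith
  have hℓ0 : (0:ℝ) < ℓ := by linarith
  have hlogℓ0 : 0 ≤ Real.log ℓ := Real.log_nonneg (by linarith)
  set t := ℓ - 2 * Real.log ℓ with htdef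
  have ht34 : ℓ * (3/4) ≤ t := by rw [htdef]; linarith
  have ht0 : (0:ℝ) < t := by nlinarith
  have hexpt : Real.exp t = p / ℓ^2 := by
    rw [htdef, Real.exp_sub, hℓdef, Real.exp_log hp0,
      show (2:ℝ) * Real.log (Real.log p) = Real.log (Real.log p) + Real.log (Real.log p) by ring,
      Real.exp_add, Real.exp_log (by rw [← hℓdef]; exact hℓ0)]
    rw [← hℓdef]
    ring_nf
  have hE : (0:ℝ) < Real.exp 1 := Real.exp_pos 1
  have hE3 : Real.exp 1 ≤ 3 := by
    have := Real.exp_one_lt_d9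
    linarith
  have het : Real.exp 1 * t ≤ p := by nlinarith
  have hbase1 : (1:ℝ) ≤ p / (Real.exp 1 * t) := by
    rw [le_div_iff₀ (by positivity)]
    linarith
  have hA1 : (1:ℝ) ≤ (p / (Real.exp 1 * t)) ^ p * Real.exp (Real.exp t) := by
    have r1 : (1:ℝ) ≤ (p / (Real.exp 1 * t)) ^ p := by
      have r1 := Real.rpow_le_rpow zero_le_one hbase1 hp0.le
      rwa [Real.one_rpow] at r1
    nlinarith [Real.one_le_exp (Real.exp_pos t).le]
  have hS : ∑' k, gf p k ≤ (2 * Real.exp (-1)) * ((p / (Real.exp 1 * t)) ^ p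
      * Real.exp (Real.exp t)) := by
    have := S_upper p t hp0 ht0
    nlinarith [Real.exp_pos (-1:ℝ)]
  have hrpow : (∑' k, gf p k) ^ (1/p) ≤ (2 * Real.exp (-1)) ^ (1/p)
      * (p / (Real.exp 1 * t)) * Real.exp (Real.exp t / p) := by
    have h' := Real.rpow_le_rpow (tsum_nonneg (gf_nonneg p)) hS (by positivity : (0:ℝ) ≤ 1/p)
    rw [Real.mul_rpow (by positivity) (by positivity),
      Real.mul_rpow (Real.rpow_nonneg (by positivity) p) (Real.exp_pos _).le,
      ← Real.rpow_mul (by positivity), mul_one_div_cancel hp0.ne', Real.rpow_one,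
      ← Real.exp_mul] at h'
    calc (∑' k, gf p k) ^ (1/p)
        ≤ (2 * Real.exp (-1)) ^ (1/p) * (p / (Real.exp 1 * t) * Real.exp (Real.exp t * (1/p))) :=
          h'
      _ = (2 * Real.exp (-1)) ^ (1/p) * (p / (Real.exp 1 * t)) * Real.exp (Real.exp t / p) := by
          rw [show Real.exp t * (1/p) = Real.exp t / p by ring]
          ring
  have hexptp : Real.exp (Real.exp t / p) = Real.exp (1/ℓ^2) := by
    congr 1
    rw [hexpt]
    field_simp
  calc (∑' k, gf p k) ^ (1/p) * (Real.exp 1 * ℓ) / p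
      ≤ ((2 * Real.exp (-1)) ^ (1/p) * (p / (Real.exp 1 * t)) * Real.exp (Real.exp t / p))
          * (Real.exp 1 * ℓ) / p := by
        gcongr
    _ = (2 * Real.exp (-1)) ^ (1/p) * Real.exp (1/ℓ^2) * (ℓ / t) := by
        rw [hexptp]
        field_simp

/-- The real-valued `L^p` norm `(E|f|^p)^{1/p}` for real exponent `p`. -/
noncomputable def lpNorm {Ω : Type*} [MeasurableSpace Ω] (μ : Measure Ω)
    (f : Ω → ℝ) (p : ℝ) : ℝ := (∫ ω, |f ω| ^ p ∂μ) ^ (1 / p)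

lemma tendsto_lowf : Tendsto (fun p : ℝ =>
    Real.exp (-(1/p)) * Real.exp (-(Real.log p / p)) * (1 - Real.log p / p)) atTop (nhds 1) := by
  have hlogp : Tendsto (fun p : ℝ => Real.log p / p) atTop (nhds 0) :=
    Real.isLittleO_log_id_atTop.tendsto_div_nhds_zero
  have h1p : Tendsto (fun p : ℝ => 1/p) atTop (nhds 0) := by
    simpa [one_div] using tendsto_inv_atTop_zero
  have e1 : Tendsto (fun p : ℝ => Real.exp (-(1/p))) atTop (nhds 1) := by
    have h : Tendsto (fun p : ℝ => -(1/p)) atTop (nhds 0) := by simpa using h1p.neg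
    simpa [Function.comp_def] using (Real.continuous_exp.tendsto 0).comp h
  have e2 : Tendsto (fun p : ℝ => Real.exp (-(Real.log p / p))) atTop (nhds 1) := by
    have h : Tendsto (fun p : ℝ => -(Real.log p / p)) atTop (nhds 0) := by simpa using hlogp.neg
    simpa [Function.comp_def] using (Real.continuous_exp.tendsto 0).comp h
  have e3 : Tendsto (fun p : ℝ => 1 - Real.log p / p) atTop (nhds 1) := by
    simpa using tendsto_const_nhds.sub hlogp
  simpa using (e1.mul e2).mul e3

lemma tendsto_upf : Tendsto (fun p : ℝ =>
    (2 * Real.exp (-1)) ^ (1/p) * Real.exp (1/(Real.log p)^2)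
      * (Real.log p / (Real.log p - 2 * Real.log (Real.log p)))) atTop (nhds 1) := by
  have h1p : Tendsto (fun p : ℝ => 1/p) atTop (nhds 0) := by
    simpa [one_div] using tendsto_inv_atTop_zero
  have hc : (0:ℝ) < 2 * Real.exp (-1) := by positivity
  have u1 : Tendsto (fun p : ℝ => (2 * Real.exp (-1)) ^ (1/p)) atTop (nhds 1) := by
    have hrw : ∀ p : ℝ, (2 * Real.exp (-1)) ^ (1/p)
        = Real.exp (Real.log (2 * Real.exp (-1)) * (1/p)) := fun p => Real.rpow_def_of_pos hc _
    simp only [hrw]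
    have h : Tendsto (fun p : ℝ => Real.log (2 * Real.exp (-1)) * (1/p)) atTop (nhds 0) := by
      simpa using h1p.const_mul (Real.log (2 * Real.exp (-1)))
    simpa [Function.comp_def] using (Real.continuous_exp.tendsto 0).comp h
  have u2 : Tendsto (fun p : ℝ => Real.exp (1/(Real.log p)^2)) atTop (nhds 1) := by
    have hsq : Tendsto (fun p : ℝ => (Real.log p)^2) atTop atTop :=
      (tendsto_pow_atTop two_ne_zero).comp Real.tendsto_log_atTop
    have h : Tendsto (fun p : ℝ => 1/(Real.log p)^2) atTop (nhds 0) := by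
      simpa [one_div, Pi.inv_def] using hsq.inv_tendsto_atTop
    simpa [Function.comp_def] using (Real.continuous_exp.tendsto 0).comp h
  have u3' : Tendsto (fun x : ℝ => x / (x - 2 * Real.log x)) atTop (nhds 1) := by
    have hlx : Tendsto (fun x : ℝ => Real.log x / x) atTop (nhds 0) :=
      Real.isLittleO_log_id_atTop.tendsto_div_nhds_zero
    have hden : Tendsto (fun x : ℝ => 1 - 2 * (Real.log x / x)) atTop (nhds 1) := by
      simpa using tendsto_const_nhds.sub ((hlx.const_mul 2))
    have hinv := hden.inv₀ (by norm_num : (1:ℝ) ≠ 0)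
    apply Tendsto.congr' _ (by simpa using hinv)
    filter_upwards [eventually_gt_atTop (0:ℝ)] with x hx
    rw [show 1 - 2 * (Real.log x / x) = (x - 2 * Real.log x)/x by field_simp, inv_div]
  have u3 : Tendsto (fun p : ℝ =>
      Real.log p / (Real.log p - 2 * Real.log (Real.log p))) atTop (nhds 1) :=
    u3'.comp Real.tendsto_log_atTop
  simpa using (u1.mul u2).mul u3

theorem centered_poisson_lp_asymptotics
    {Ω : Type*} [MeasurableSpace Ω] (μ : Measure Ω) [IsProbabilityMeasure μ]
    (η : Ω → ℕ) (hη : Measurable η)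
    (hdist : μ.map η = poissonMeasure 1)
    (ξ : Ω → ℝ) (hξ : ξ = fun ω => (η ω : ℝ) - 1) :
    Tendsto (fun p : ℝ => lpNorm μ ξ p * (Real.exp 1 * Real.log p) / p)
      atTop (nhds 1) := by
  subst hξ
  have ev1 : ∀ᶠ p : ℝ in atTop, 2 ≤ Real.log p :=
    Real.tendsto_log_atTop.eventually_ge_atTop 2
  have evc : ∀ c : ℝ, 0 < c → ∀ᶠ x : ℝ in atTop, Real.log x ≤ x * c := by
    intro c hc
    filter_upwards [Real.isLittleO_log_id_atTop.def hc, eventually_ge_atTop (0:ℝ)] with x hx hx0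
    calc Real.log x ≤ |Real.log x| := le_abs_self _
      _ ≤ c * |x| := by simpa [Real.norm_eq_abs] using hx
      _ = x * c := by rw [abs_of_nonneg hx0]; ring
  have ev2 : ∀ᶠ p : ℝ in atTop, Real.log p ≤ p / 4 := by
    filter_upwards [evc (1/4) (by norm_num)] with x hx
    linarith
  have ev3 : ∀ᶠ p : ℝ in atTop, Real.log (Real.log p) ≤ Real.log p / 8 := by
    have h8 : ∀ᶠ x : ℝ in atTop, Real.log x ≤ x / 8 := by
      filter_upwards [evc (1/8) (by norm_num)] with x hx
      linarith
    exact Real.tendsto_log_atTop.eventually h8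
  have ev4 : ∀ᶠ p : ℝ in atTop, 2 ≤ p := eventually_ge_atTop 2
  apply tendsto_of_tendsto_of_tendsto_of_le_of_le' tendsto_lowf tendsto_upf
  · filter_upwards [ev1, ev2, ev4] with p h1 h2 h4
    have hp0 : (0:ℝ) < p := by linarith
    show _ ≤ lpNorm μ (fun ω => (η ω : ℝ) - 1) p * (Real.exp 1 * Real.log p) / p
    simp only [_root_.lpNorm]
    rw [show (∫ ω, |(η ω : ℝ) - 1| ^ p ∂μ) = ∑' k, gf p k from int_repr μ η hη hdist p hp0]
    exact ratio_lower p h1 h2 h4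
  · filter_upwards [ev1, ev2, ev3, ev4] with p h1 h2 h3 h4
    have hp0 : (0:ℝ) < p := by linarith
    show lpNorm μ (fun ω => (η ω : ℝ) - 1) p * (Real.exp 1 * Real.log p) / p ≤ _
    simp only [_root_.lpNorm]
    rw [show (∫ ω, |(η ω : ℝ) - 1| ^ p ∂μ) = ∑' k, gf p k from int_repr μ η hη hdist p hp0]
    exact ratio_upper p h1 h2 h3 h4
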